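/- arXiv:0705.1587 — 3 statements merged into one kernel-verified Lean document; each statement's English description precedes it below -/
import Mathlib

section
/- Fefferman–de la Llave decomposition: for all distinct r, r' ∈ ℝ³, |r - r'|^{-1} = (1/π) ∫_0^∞ ∫_{ℝ³} B_{z,s}(r) B_{z,s}(r') dz ds/s⁵, where B_{z,s} is the characteristic function of the ball of radius s centered at z. -/
open MeasureTheory

noncomputable section

abbrev E3 := EuclideanSpace ℝ (Fin 3)

open Metric Set in
lemma disk_area (c : ℝ) :
    volume {y : Fin 2 → ℝ | y 0 ^ 2 + y 1 ^ 2 < c} = ENNReal.ofReal (Real.pi * c) := by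
  rcases le_or_gt c 0 with hc | hc
  · have : {y : Fin 2 → ℝ | y 0 ^ 2 + y 1 ^ 2 < c} = ∅ := by
      ext y; simp only [mem_setOf_eq, mem_empty_iff_false, iff_false, not_lt]
      nlinarith [sq_nonneg (y 0), sq_nonneg (y 1)]
    rw [this, measure_empty, Eq.comm, ENNReal.ofReal_eq_zero]
    exact mul_nonpos_of_nonneg_of_nonpos Real.pi_pos.le hc
  · have hmeas : MeasurableSet {y : Fin 2 → ℝ | y 0 ^ 2 + y 1 ^ 2 < c} := by
      apply measurableSet_lt (by fun_prop) measurable_const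
    have hpre : ((MeasurableEquiv.toLp 2 (Fin 2 → ℝ)).symm) ⁻¹' {y : Fin 2 → ℝ | y 0 ^ 2 + y 1 ^ 2 < c}
        = Metric.ball (0 : EuclideanSpace ℝ (Fin 2)) (Real.sqrt c) := by
      ext y
      simp only [mem_preimage, mem_setOf_eq, mem_ball, EuclideanSpace.dist_eq, Real.dist_eq,
        sub_zero, sq_abs, Fin.sum_univ_two]
      rw [show (0 : EuclideanSpace ℝ (Fin 2)) 0 = 0 from rfl,
        show (0 : EuclideanSpace ℝ (Fin 2)) 1 = 0 from rfl, sub_zero, sub_zero]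
      rw [show (((MeasurableEquiv.toLp 2 (Fin 2 → ℝ)).symm) y : Fin 2 → ℝ) 0 = y 0 from rfl,
        show (((MeasurableEquiv.toLp 2 (Fin 2 → ℝ)).symm) y : Fin 2 → ℝ) 1 = y 1 from rfl]
      constructor
      · intro h; exact Real.sqrt_lt_sqrt (by positivity) h
      · intro h
        have := Real.sqrt_lt' (y := Real.sqrt c) (Real.sqrt_pos.mpr hc) |>.mp h
        rwa [Real.sq_sqrt hc.le] at this
    rw [← (EuclideanSpace.volume_preserving_symm_measurableEquiv_toLp (Fin 2)).measure_preimage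
      hmeas.nullMeasurableSet, hpre, EuclideanSpace.volume_ball]
    simp only [Fintype.card_fin]
    rw [show ((2:ℕ) : ℝ)/2 + 1 = 2 by norm_num, Real.Gamma_two]
    rw [← ENNReal.ofReal_pow (Real.sqrt_nonneg c), Real.sq_sqrt hc.le,
      ← ENNReal.ofReal_mul hc.le]
    congr 1
    rw [Real.sq_sqrt Real.pi_pos.le]
    ring

open Metric Set in
lemma gsupp (d s : ℝ) (hs : 0 ≤ s) (t : ℝ) (ht : t ∉ Icc (d - s) s) :
    Real.pi * max (s ^ 2 - max (t ^ 2) ((t - d) ^ 2)) 0 = 0 := by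
  simp only [mem_Icc, not_and_or, not_le] at ht
  have : s ^ 2 - max (t ^ 2) ((t - d) ^ 2) ≤ 0 := by
    rcases ht with ht | ht
    · have h0 : s ^ 2 ≤ (t - d) ^ 2 := by nlinarith [mul_nonneg (by linarith : (0:ℝ) ≤ d - s - t) (by linarith : (0:ℝ) ≤ d + s - t)]
      have := le_max_right (t ^ 2) ((t - d) ^ 2)
      linarith
    · have h0 : s ^ 2 ≤ t ^ 2 := by nlinarith [mul_nonneg (by linarith : (0:ℝ) ≤ t - s) (by linarith : (0:ℝ) ≤ t + s)]
      have := le_max_left (t ^ 2) ((t - d) ^ 2)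
      linarith
  rw [max_eq_right this, mul_zero]

open Metric Set in
lemma gint (d s : ℝ) (hd : 0 < d) (hds : d < 2 * s) :
    ∫ t : ℝ, Real.pi * max (s ^ 2 - max (t ^ 2) ((t - d) ^ 2)) 0
      = Real.pi / 12 * (16 * s ^ 3 - 12 * d * s ^ 2 + d ^ 3) := by
  have hs : 0 < s := by linarith
  set g : ℝ → ℝ := fun t => Real.pi * max (s ^ 2 - max (t ^ 2) ((t - d) ^ 2)) 0 with hg
  have hgc : Continuous g := by fun_prop
  have h1 : d - s ≤ d / 2 := by linarith
  have h2 : d / 2 ≤ s := by linarith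
  have hint : ∫ t : ℝ, g t = ∫ t in Icc (d - s) s, g t :=
    (setIntegral_eq_integral_of_forall_compl_eq_zero (fun x hx => gsupp d s hs.le x hx)).symm
  rw [hint, integral_Icc_eq_integral_Ioc, ← intervalIntegral.integral_of_le (by linarith),
    ← intervalIntegral.integral_add_adjacent_intervals
      (hgc.intervalIntegrable (d - s) (d / 2)) (hgc.intervalIntegrable (d / 2) s)]
  have e1 : ∫ t in (d - s)..(d / 2), g t = ∫ t in (d - s)..(d / 2), Real.pi * (s ^ 2 - (t - d) ^ 2) := by
    apply intervalIntegral.integral_congr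
    intro t ht
    rw [uIcc_of_le h1, mem_Icc] at ht
    have hmax : max (t ^ 2) ((t - d) ^ 2) = (t - d) ^ 2 :=
      max_eq_right (by nlinarith [ht.1, ht.2])
    have hpos : 0 ≤ s ^ 2 - (t - d) ^ 2 := by nlinarith [ht.1, ht.2]
    simp only [hg, hmax, max_eq_left hpos]
  have e2 : ∫ t in (d / 2)..s, g t = ∫ t in (d / 2)..s, Real.pi * (s ^ 2 - t ^ 2) := by
    apply intervalIntegral.integral_congr
    intro t ht
    rw [uIcc_of_le h2, mem_Icc] at ht
    have hmax : max (t ^ 2) ((t - d) ^ 2) = t ^ 2 :=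
      max_eq_left (by nlinarith [ht.1, ht.2])
    have hpos : 0 ≤ s ^ 2 - t ^ 2 := by nlinarith [ht.1, ht.2]
    simp only [hg, hmax, max_eq_left hpos]
  have d1 : ∫ t in (d - s)..(d / 2), Real.pi * (s ^ 2 - (t - d) ^ 2)
      = (Real.pi * (s ^ 2 * (d/2) - (d/2 - d) ^ 3 / 3)) - (Real.pi * (s ^ 2 * (d-s) - (d - s - d) ^ 3 / 3)) := by
    apply intervalIntegral.integral_eq_sub_of_hasDerivAt (f := fun t => Real.pi * (s ^ 2 * t - (t - d) ^ 3 / 3))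
    · intro t _
      have hb : HasDerivAt (fun t : ℝ => t - d) 1 t := (hasDerivAt_id t).sub_const d
      have h3 : HasDerivAt (fun t : ℝ => (t - d) ^ 3) (3 * (t - d) ^ 2 * 1) t := hb.pow 3
      have := (((hasDerivAt_id t).const_mul (s ^ 2)).sub (h3.div_const 3)).const_mul Real.pi
      refine this.congr_deriv ?_
      ring
    · exact (by fun_prop : Continuous fun t : ℝ => Real.pi * (s ^ 2 - (t - d) ^ 2)).intervalIntegrable _ _
  have d2 : ∫ t in (d / 2)..s, Real.pi * (s ^ 2 - t ^ 2)
      = (Real.pi * (s ^ 2 * s - s ^ 3 / 3)) - (Real.pi * (s ^ 2 * (d/2) - (d/2) ^ 3 / 3)) := by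
    apply intervalIntegral.integral_eq_sub_of_hasDerivAt (f := fun t => Real.pi * (s ^ 2 * t - t ^ 3 / 3))
    · intro t _
      have h3 : HasDerivAt (fun t : ℝ => t ^ 3) (3 * t ^ 2 * 1) t := (hasDerivAt_id t).pow 3
      have := (((hasDerivAt_id t).const_mul (s ^ 2)).sub (h3.div_const 3)).const_mul Real.pi
      refine this.congr_deriv ?_
      ring
    · exact (by fun_prop : Continuous fun t : ℝ => Real.pi * (s ^ 2 - t ^ 2)).intervalIntegrable _ _
  rw [e1, e2, d1, d2]
  ring

open Metric Set in
lemma canonical_lens (d s : ℝ) (hd : 0 < d) (hds : d < 2 * s) :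
    volume {x : Fin 3 → ℝ | x 0 ^ 2 + x 1 ^ 2 + x 2 ^ 2 < s ^ 2 ∧
        (x 0 - d) ^ 2 + x 1 ^ 2 + x 2 ^ 2 < s ^ 2}
      = ENNReal.ofReal (Real.pi / 12 * (16 * s ^ 3 - 12 * d * s ^ 2 + d ^ 3)) := by
  have hs : 0 < s := by linarith
  set T : Set (ℝ × (Fin 2 → ℝ)) := {p | p.1 ^ 2 + p.2 0 ^ 2 + p.2 1 ^ 2 < s ^ 2 ∧
      (p.1 - d) ^ 2 + p.2 0 ^ 2 + p.2 1 ^ 2 < s ^ 2} with hT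
  have hTmeas : MeasurableSet T := by
    rw [hT, setOf_and]
    exact (measurableSet_lt (by fun_prop) measurable_const).inter
      (measurableSet_lt (by fun_prop) measurable_const)
  have hpre : (MeasurableEquiv.piFinSuccAbove (fun _ : Fin 3 => ℝ) 0) ⁻¹' T
      = {x : Fin 3 → ℝ | x 0 ^ 2 + x 1 ^ 2 + x 2 ^ 2 < s ^ 2 ∧
        (x 0 - d) ^ 2 + x 1 ^ 2 + x 2 ^ 2 < s ^ 2} := by
    ext x
    rfl
  have hmp := measurePreserving_piFinSuccAbove (fun _ : Fin 3 => (volume : Measure ℝ)) 0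
  rw [← hpre, MeasureTheory.volume_pi, hmp.measure_preimage hTmeas.nullMeasurableSet,
    Measure.prod_apply hTmeas]
  have hslice : ∀ t : ℝ, (Measure.pi fun _ : Fin 2 => (volume : Measure ℝ)) (Prod.mk t ⁻¹' T)
      = ENNReal.ofReal (Real.pi * max (s ^ 2 - max (t ^ 2) ((t - d) ^ 2)) 0) := by
    intro t
    have hset : (Prod.mk t ⁻¹' T) = {y : Fin 2 → ℝ | y 0 ^ 2 + y 1 ^ 2 < s ^ 2 - max (t ^ 2) ((t - d) ^ 2)} := by
      ext y
      simp only [hT, mem_preimage, mem_setOf_eq]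
      constructor
      · rintro ⟨h1, h2⟩
        rcases max_cases (t ^ 2) ((t - d) ^ 2) with ⟨hm, _⟩ | ⟨hm, _⟩ <;> rw [hm] <;> linarith
      · intro h
        have ha := le_max_left (t ^ 2) ((t - d) ^ 2)
        have hb := le_max_right (t ^ 2) ((t - d) ^ 2)
        constructor <;> linarith
    rw [hset, ← MeasureTheory.volume_pi, disk_area]
    rcases le_or_gt (s ^ 2 - max (t ^ 2) ((t - d) ^ 2)) 0 with hc | hc
    · rw [max_eq_right hc]
      rw [ENNReal.ofReal_eq_zero.mpr, ENNReal.ofReal_eq_zero.mpr]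
      · simp
      · exact mul_nonpos_of_nonneg_of_nonpos Real.pi_pos.le hc
    · rw [max_eq_left hc.le]
  simp_rw [hslice]
  have hgc : Continuous (fun t : ℝ => Real.pi * max (s ^ 2 - max (t ^ 2) ((t - d) ^ 2)) 0) := by
    fun_prop
  have hcs : HasCompactSupport (fun t : ℝ => Real.pi * max (s ^ 2 - max (t ^ 2) ((t - d) ^ 2)) 0) :=
    HasCompactSupport.intro isCompact_Icc (gsupp d s hs.le)
  have hintg : Integrable (fun t : ℝ => Real.pi * max (s ^ 2 - max (t ^ 2) ((t - d) ^ 2)) 0) :=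
    hgc.integrable_of_hasCompactSupport hcs
  rw [← ofReal_integral_eq_lintegral_ofReal hintg
    (Filter.Eventually.of_forall fun t => mul_nonneg Real.pi_pos.le (le_max_right _ _)),
    gint d s hd hds]

open Metric Set in
lemma lens_vol (r r' : E3) (s : ℝ) (hd : 0 < dist r r') (hds : dist r r' < 2 * s) :
    volume (ball r s ∩ ball r' s) = ENNReal.ofReal
      (Real.pi / 12 * (16 * s ^ 3 - 12 * (dist r r') * s ^ 2 + (dist r r') ^ 3)) := by
  have hs : 0 < s := by linarith
  set d := dist r r' with hdd
  set w : E3 := d • EuclideanSpace.single (0 : Fin 3) (1 : ℝ) with hw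
  have hwn : ‖w‖ = d := by
    rw [hw, norm_smul, EuclideanSpace.norm_single, norm_one, mul_one, Real.norm_eq_abs,
      abs_of_pos hd]
  set v : E3 := r' - r with hv
  have hvn : ‖v‖ = d := by rw [hv, ← dist_eq_norm, dist_comm]
  set e := Submodule.reflection (Submodule.span ℝ {w - v})ᗮ with he
  have hew : e w = v := Submodule.reflection_sub (by rw [hwn, hvn])
  set f : E3 → E3 := fun x => e x + r with hf
  have hfmp : MeasurePreserving f volume volume :=
    (measurePreserving_add_right volume r).comp e.measurePreserving
  have hpre : f ⁻¹' (ball r s ∩ ball r' s) = ball 0 s ∩ ball w s := by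
    ext x
    simp only [hf, mem_preimage, mem_inter_iff, mem_ball]
    constructor
    · rintro ⟨h1, h2⟩
      refine ⟨?_, ?_⟩
      · rwa [dist_eq_norm, add_sub_cancel_right, e.norm_map, ← dist_zero_right] at h1
      · rw [dist_eq_norm] at h2 ⊢
        rwa [show e x + r - r' = e x - v by rw [hv]; abel, ← hew, ← map_sub, e.norm_map] at h2
    · rintro ⟨h1, h2⟩
      refine ⟨?_, ?_⟩
      · rwa [dist_eq_norm, add_sub_cancel_right, e.norm_map, ← dist_zero_right]
      · rw [dist_eq_norm] at h2 ⊢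
        rwa [show e x + r - r' = e x - v by rw [hv]; abel, ← hew, ← map_sub, e.norm_map]
  have hball : volume (ball r s ∩ ball r' s) = volume (ball (0 : E3) s ∩ ball w s) := by
    rw [← hfmp.measure_preimage (measurableSet_ball.inter measurableSet_ball).nullMeasurableSet,
      hpre]
  rw [hball]
  have hw0 : w 0 = d := by simp [hw, EuclideanSpace.single_apply]
  have hw1 : w 1 = 0 := by simp [hw, EuclideanSpace.single_apply]
  have hw2 : w 2 = 0 := by simp [hw, EuclideanSpace.single_apply]
  set S : Set (Fin 3 → ℝ) := {x | x 0 ^ 2 + x 1 ^ 2 + x 2 ^ 2 < s ^ 2 ∧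
      (x 0 - d) ^ 2 + x 1 ^ 2 + x 2 ^ 2 < s ^ 2} with hS
  have hSmeas : MeasurableSet S := by
    rw [hS, setOf_and]
    exact (measurableSet_lt (by fun_prop) measurable_const).inter
      (measurableSet_lt (by fun_prop) measurable_const)
  have hpre2 : ((MeasurableEquiv.toLp 2 (Fin 3 → ℝ)).symm) ⁻¹' S = ball (0 : E3) s ∩ ball w s := by
    ext y
    have hy : ∀ i : Fin 3, (((MeasurableEquiv.toLp 2 (Fin 3 → ℝ)).symm) y : Fin 3 → ℝ) i = y i :=
      fun _ => rfl
    simp only [mem_preimage, hS, mem_setOf_eq, mem_inter_iff, mem_ball, EuclideanSpace.dist_eq,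
      Real.dist_eq, Fin.sum_univ_three, hy]
    rw [show (0 : E3) 0 = 0 from rfl, show (0 : E3) 1 = 0 from rfl, show (0 : E3) 2 = 0 from rfl,
      hw0, hw1, hw2]
    simp only [sub_zero, sq_abs]
    rw [Real.sqrt_lt' hs, Real.sqrt_lt' hs]
  rw [← hpre2, (EuclideanSpace.volume_preserving_symm_measurableEquiv_toLp (Fin 3)).measure_preimage
    hSmeas.nullMeasurableSet]
  exact canonical_lens d s hd hds

open Metric Set in
lemma Fderiv (d : ℝ) (x : ℝ) (hx : x ≠ 0) :
    HasDerivAt (fun s : ℝ => Real.pi / 12 *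
        (-16 * s ^ (-1 : ℤ) + 6 * d * s ^ (-2 : ℤ) - d ^ 3 / 4 * s ^ (-4 : ℤ)))
      (Real.pi / 12 * (16 * x ^ 3 - 12 * d * x ^ 2 + d ^ 3) / x ^ 5) x := by
  have h1 := hasDerivAt_zpow (-1) x (Or.inl hx)
  have h2 := hasDerivAt_zpow (-2) x (Or.inl hx)
  have h4 := hasDerivAt_zpow (-4) x (Or.inl hx)
  have H := (((h1.const_mul (-16 : ℝ)).add (h2.const_mul (6 * d))).sub
    (h4.const_mul (d ^ 3 / 4))).const_mul (Real.pi / 12)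
  refine H.congr_deriv ?_
  have e2 : (x:ℝ) ^ (-1 - 1 : ℤ) = (x ^ (2:ℕ))⁻¹ := by
    rw [show (-1 - 1 : ℤ) = -((2:ℕ):ℤ) from rfl, zpow_neg, zpow_natCast]
  have e3 : (x:ℝ) ^ (-2 - 1 : ℤ) = (x ^ (3:ℕ))⁻¹ := by
    rw [show (-2 - 1 : ℤ) = -((3:ℕ):ℤ) from rfl, zpow_neg, zpow_natCast]
  have e5 : (x:ℝ) ^ (-4 - 1 : ℤ) = (x ^ (5:ℕ))⁻¹ := by
    rw [show (-4 - 1 : ℤ) = -((5:ℕ):ℤ) from rfl, zpow_neg, zpow_natCast]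
  rw [e2, e3, e5]
  push_cast
  field_simp
  ring

open Metric Set

/-- Fefferman–de la Llave decomposition of the Coulomb kernel: for `r ≠ r'` in `ℝ³`,
`|r-r'|⁻¹ = (1/π) ∫_0^∞ ∫_{ℝ³} B_{z,s}(r) B_{z,s}(r') dz ds/s⁵`,
where `B_{z,s}` is the characteristic function of the ball of radius `s` about `z`. -/
theorem fefferman_de_la_llave (r r' : E3) (h : r ≠ r') :
    (dist r r')⁻¹ =
      (1 / Real.pi) * ∫ s in Set.Ioi (0 : ℝ),
        (∫ z : E3, (if dist r z < s then (1 : ℝ) else 0) *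
          (if dist r' z < s then (1 : ℝ) else 0)) / s ^ 5 := by
  set d := dist r r' with hdd
  have hd : 0 < d := dist_pos.mpr h
  set G : ℝ → ℝ := fun s => Real.pi / 12 * (16 * s ^ 3 - 12 * d * s ^ 2 + d ^ 3) / s ^ 5 with hG
  have hinner : ∀ s : ℝ, 0 < s →
      (∫ z : E3, (if dist r z < s then (1 : ℝ) else 0) * (if dist r' z < s then (1 : ℝ) else 0))
        = (volume (ball r s ∩ ball r' s)).toReal := by
    intro s hs
    have : (fun z : E3 => (if dist r z < s then (1 : ℝ) else 0) *
        (if dist r' z < s then (1 : ℝ) else 0)) = (ball r s ∩ ball r' s).indicator 1 := by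
      funext z
      by_cases h1 : dist r z < s <;> by_cases h2 : dist r' z < s <;>
        simp [Set.indicator_apply, mem_inter_iff, mem_ball, dist_comm z r, dist_comm z r', h1, h2]
    rw [this, integral_indicator_one (measurableSet_ball.inter measurableSet_ball)]
    rfl
  have hcong : ∀ s ∈ Ioi (0:ℝ),
      (∫ z : E3, (if dist r z < s then (1 : ℝ) else 0) * (if dist r' z < s then (1 : ℝ) else 0)) / s ^ 5
        = (Ioi (d/2)).indicator G s := by
    intro s hs
    rw [mem_Ioi] at hs
    rw [hinner s hs]
    by_cases hds : d < 2 * s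
    · have hmem : s ∈ Ioi (d/2) := by rw [mem_Ioi]; linarith
      rw [lens_vol r r' s hd hds, Set.indicator_of_mem hmem, ENNReal.toReal_ofReal, hG]
      have h1 : 16 * s ^ 3 - 12 * d * s ^ 2 + d ^ 3 = (2*s - d)^2 * (4*s + d) := by ring
      rw [h1]
      have h2 : (0:ℝ) ≤ (2*s - d)^2 * (4*s + d) := mul_nonneg (sq_nonneg _) (by linarith)
      positivity
    · have hmem : s ∉ Ioi (d/2) := by rw [mem_Ioi]; push_neg at hds ⊢; linarith
      have hempty : ball r s ∩ ball r' s = ∅ := by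
        ext z
        simp only [mem_inter_iff, mem_ball, mem_empty_iff_false, iff_false, not_and, not_lt]
        intro h1
        push_neg at hds
        have h3 := dist_triangle r z r'
        rw [dist_comm r z] at h3
        rw [← hdd] at h3
        linarith
      rw [hempty, Set.indicator_of_notMem hmem, measure_empty]
      simp
  rw [setIntegral_congr_fun measurableSet_Ioi hcong]
  have hsub : Ioi (d/2) ⊆ Ioi (0:ℝ) := fun x hx => lt_trans (by positivity : (0:ℝ) < d/2) hx
  rw [integral_indicator measurableSet_Ioi, Measure.restrict_restrict measurableSet_Ioi,
    inter_eq_left.mpr hsub]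
  set F : ℝ → ℝ := fun s => Real.pi / 12 *
      (-16 * s ^ (-1 : ℤ) + 6 * d * s ^ (-2 : ℤ) - d ^ 3 / 4 * s ^ (-4 : ℤ)) with hF
  have hftc : ∫ s in Ioi (d/2), G s = 0 - F (d/2) := by
    apply integral_Ioi_of_hasDerivAt_of_nonneg
    · exact (Fderiv d (d/2) (by positivity)).continuousAt.continuousWithinAt
    · intro x hx
      rw [mem_Ioi] at hx
      exact Fderiv d x (ne_of_gt (lt_trans (by positivity) hx))
    · intro x hx
      rw [mem_Ioi] at hx
      have hx0 : 0 < x := by linarith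
      show 0 ≤ Real.pi / 12 * (16 * x ^ 3 - 12 * d * x ^ 2 + d ^ 3) / x ^ 5
      have h1 : 16 * x ^ 3 - 12 * d * x ^ 2 + d ^ 3 = (2*x - d)^2 * (4*x + d) := by ring
      rw [h1]
      have h2 : (0:ℝ) ≤ (2*x - d)^2 * (4*x + d) := mul_nonneg (sq_nonneg _) (by linarith)
      positivity
    · rw [hF]
      have hz : ∀ n : ℤ, n < 0 → Filter.Tendsto (fun x : ℝ => x ^ n) Filter.atTop (nhds 0) :=
        fun n hn => tendsto_zpow_atTop_zero hn
      have h1 := ((hz (-1) (by norm_num)).const_mul (-16 : ℝ)).add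
        ((hz (-2) (by norm_num)).const_mul (6 * d))
      have h2 := h1.sub ((hz (-4) (by norm_num)).const_mul (d ^ 3 / 4))
      have h3 := h2.const_mul (Real.pi / 12)
      simpa using h3
  rw [hftc]
  simp only [hF]
  have hd2 : (d/2 : ℝ) ≠ 0 := by positivity
  rw [show ((d/2 : ℝ) ^ (-1 : ℤ)) = (d/2)⁻¹ by simp,
    show ((d/2 : ℝ) ^ (-2 : ℤ)) = ((d/2)^(2:ℕ))⁻¹ by
      rw [show (-2 : ℤ) = -((2:ℕ):ℤ) from rfl, zpow_neg, zpow_natCast],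
    show ((d/2 : ℝ) ^ (-4 : ℤ)) = ((d/2)^(4:ℕ))⁻¹ by
      rw [show (-4 : ℤ) = -((4:ℕ):ℤ) from rfl, zpow_neg, zpow_natCast]]
  have hpi : Real.pi ≠ 0 := Real.pi_ne_zero
  field_simp
  ring

end
end

section
/- Wigner–Yanase concavity: for any bounded operator B on a Hilbert space, the map γ ↦ Tr(γ^{1/2} B† γ^{1/2} B) is concave on the set of nonnegative trace-class operators γ. -/
open Matrix
open scoped ComplexOrder Kronecker

set_option linter.unusedSectionVars false
set_option maxHeartbeats 8000000

namespace Matrix.PosSemidef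
/-- The positive semidefinite square root of a positive semidefinite matrix
(the definition Mathlib had in December 2024, since removed). -/
noncomputable def sqrt {n 𝕜 : Type*} [Fintype n] [RCLike 𝕜] [DecidableEq n] {A : Matrix n n 𝕜}
    (hA : A.PosSemidef) : Matrix n n 𝕜 :=
  hA.1.eigenvectorUnitary.1 * diagonal ((↑) ∘ (√·) ∘ hA.1.eigenvalues) *
  (star hA.1.eigenvectorUnitary : Matrix n n 𝕜)

lemma posSemidef_sqrt {n 𝕜 : Type*} [Fintype n] [RCLike 𝕜] [DecidableEq n] {A : Matrix n n 𝕜}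
    (hA : A.PosSemidef) : hA.sqrt.PosSemidef := by
  have hD : (diagonal ((↑) ∘ (√·) ∘ hA.1.eigenvalues : n → 𝕜)).PosSemidef := by
    rw [posSemidef_diagonal_iff]
    intro i
    simp only [Function.comp_apply]
    exact RCLike.ofReal_nonneg.mpr (Real.sqrt_nonneg _)
  exact hD.mul_mul_conjTranspose_same (hA.1.eigenvectorUnitary : Matrix n n 𝕜)

lemma sqrt_mul_self {n 𝕜 : Type*} [Fintype n] [RCLike 𝕜] [DecidableEq n] {A : Matrix n n 𝕜}
    (hA : A.PosSemidef) : hA.sqrt * hA.sqrt = A := by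
  have hU : (star hA.1.eigenvectorUnitary : Matrix n n 𝕜) * hA.1.eigenvectorUnitary.1 = 1 :=
    Unitary.coe_star_mul_self _
  conv_rhs => rw [hA.1.spectral_theorem, Unitary.conjStarAlgAut_apply]
  unfold sqrt
  simp only [Matrix.mul_assoc]
  rw [← Matrix.mul_assoc (star _ : Matrix n n 𝕜) hA.1.eigenvectorUnitary.1, hU, Matrix.one_mul,
    ← Matrix.mul_assoc (diagonal _), diagonal_mul_diagonal]
  congr 1
  congr 1
  congr 1
  funext i
  simp only [Function.comp_apply]
  rw [← RCLike.ofReal_mul, Real.mul_self_sqrt (hA.eigenvalues_nonneg i)]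
end Matrix.PosSemidef

namespace WYaux

variable {m : Type*} [Fintype m] [DecidableEq m]

lemma kron_conjTranspose (A B : Matrix m m ℂ) : (A ⊗ₖ B)ᴴ = Aᴴ ⊗ₖ Bᴴ := by
  ext ⟨i,j⟩ ⟨k,l⟩
  simp [conjTranspose_apply, kroneckerMap_apply, mul_comm]

lemma kron_posSemidef {A C : Matrix m m ℂ} (hA : A.PosSemidef) (hC : C.PosSemidef) :
    (A ⊗ₖ C).PosSemidef := by
  have h : A ⊗ₖ C = (hA.sqrt ⊗ₖ hC.sqrt)ᴴ * (hA.sqrt ⊗ₖ hC.sqrt) := by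
    rw [kron_conjTranspose, hA.posSemidef_sqrt.1, hC.posSemidef_sqrt.1,
      ← Matrix.mul_kronecker_mul, hA.sqrt_mul_self, hC.sqrt_mul_self]
  rw [h]
  exact posSemidef_conjTranspose_mul_self _

lemma psd_smul {M : Matrix m m ℂ} (h : M.PosSemidef) {c : ℝ} (hc : 0 ≤ c) :
    ((c : ℂ) • M).PosSemidef := by
  refine PosSemidef.of_dotProduct_mulVec_nonneg ?_ ?_
  · unfold Matrix.IsHermitian
    rw [conjTranspose_smul, h.1]
    norm_num
  · intro x
    rw [smul_mulVec, dotProduct_smul, smul_eq_mul]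
    exact mul_nonneg (by exact_mod_cast hc) (h.dotProduct_mulVec_nonneg x)

lemma psd_trans {A B C : Matrix m m ℂ} (h1 : (B - A).PosSemidef) (h2 : (C - B).PosSemidef) :
    (C - A).PosSemidef := by
  have := h2.add h1
  rwa [sub_add_sub_cancel] at this

/-- kronecker product is monotone in both arguments (on PSD matrices) -/
lemma kron_le_kron {A A' C C' : Matrix m m ℂ} (hA : A.PosSemidef) (hC : C.PosSemidef)
    (h1 : (A' - A).PosSemidef) (h2 : (C' - C).PosSemidef) :
    (A' ⊗ₖ C' - A ⊗ₖ C).PosSemidef := by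
  have hC' : C'.PosSemidef := by
    have := h2.add hC
    rwa [sub_add_cancel] at this
  have key : A' ⊗ₖ C' - A ⊗ₖ C = (A' - A) ⊗ₖ C' + A ⊗ₖ (C' - C) := by
    ext ⟨i,j⟩ ⟨k,l⟩
    simp only [kroneckerMap_apply, Matrix.sub_apply, Matrix.add_apply]
    ring
  rw [key]
  exact (kron_posSemidef h1 hC').add (kron_posSemidef hA h2)

section cong

variable (U : Matrix m m ℂ) (hU : Uᴴ * U = 1) (hU' : U * Uᴴ = 1)

/-- conjugation of a real diagonal by U -/
noncomputable def cong (d : m → ℝ) : Matrix m m ℂ :=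
  U * diagonal (fun i => (d i : ℂ)) * Uᴴ

include hU in
lemma cong_mul (d e : m → ℝ) : cong U d * cong U e = cong U (fun i => d i * e i) := by
  unfold cong
  simp only [Matrix.mul_assoc]
  rw [← Matrix.mul_assoc Uᴴ U, hU, Matrix.one_mul,
    ← Matrix.mul_assoc (diagonal _) (diagonal _), diagonal_mul_diagonal]
  congr 2
  funext i
  push_cast
  rfl

include hU' in
lemma cong_const (c : ℝ) : cong U (fun _ => c) = (c : ℂ) • 1 := by
  unfold cong
  have : diagonal (fun _ : m => (c : ℂ)) = (c : ℂ) • 1 := by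
    ext i j
    by_cases h : i = j <;> simp [diagonal, one_apply, h]
  rw [this, Matrix.mul_smul, Matrix.smul_mul, Matrix.mul_one, hU']

include hU' in
lemma cong_one : cong U (fun _ => 1) = 1 := by
  rw [cong_const U hU']
  norm_num

lemma cong_sub (d e : m → ℝ) : cong U d - cong U e = cong U (fun i => d i - e i) := by
  unfold cong
  rw [← Matrix.sub_mul, ← Matrix.mul_sub, diagonal_sub]
  push_cast
  rfl

lemma cong_add (d e : m → ℝ) : cong U d + cong U e = cong U (fun i => d i + e i) := by
  unfold cong
  rw [← Matrix.add_mul, ← Matrix.mul_add, diagonal_add]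
  push_cast
  rfl

lemma cong_herm (d : m → ℝ) : (cong U d).IsHermitian := by
  unfold Matrix.IsHermitian cong
  rw [conjTranspose_mul, conjTranspose_mul, conjTranspose_conjTranspose, diagonal_conjTranspose,
    Matrix.mul_assoc]
  have : (star fun i => ((d i : ℝ) : ℂ)) = fun i => ((d i : ℝ) : ℂ) := by
    funext i
    simp [Pi.star_apply, Complex.conj_ofReal]
  rw [this]

lemma cong_psd (d : m → ℝ) (hd : ∀ i, 0 ≤ d i) : (cong U d).PosSemidef := by
  have hdiag : (diagonal (fun i => ((d i : ℝ) : ℂ))).PosSemidef := by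
    rw [posSemidef_diagonal_iff]
    intro i
    exact_mod_cast hd i
  simpa [cong] using hdiag.mul_mul_conjTranspose_same U

end cong

/-- If `Y, G ⪰ 0` and `Y² ⪯ G²`, then `Y ⪯ G`. -/
lemma sqrt_mono {Y G : Matrix m m ℂ} (hY : Y.PosSemidef) (hG : G.PosSemidef)
    (hsq : (G * G - Y * Y).PosSemidef) : (G - Y).PosSemidef := by
  have hT : (G - Y).IsHermitian := hG.1.sub hY.1
  apply hT.posSemidef_iff_eigenvalues_nonneg.mpr
  intro i
  set v : m → ℂ := ⇑(hT.eigenvectorBasis i) with hv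
  have hvnz : v ≠ 0 := by
    intro h0
    have := hT.eigenvectorBasis.orthonormal.ne_zero i
    exact this (by ext j; exact congrFun h0 j)
  set μ : ℝ := hT.eigenvalues i with hμ
  have heig : (G - Y) *ᵥ v = (μ : ℂ) • v := by
    have := hT.mulVec_eigenvectorBasis i
    rw [← hv, ← hμ] at this
    rw [this]
    ext j
    simp [RCLike.real_smul_eq_coe_smul (K := ℂ)]
  have key : (0 : ℂ) ≤ (μ : ℂ) * (star v ⬝ᵥ G *ᵥ v + star v ⬝ᵥ Y *ᵥ v) := by
    have h0 := hsq.dotProduct_mulVec_nonneg v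
    have e1 : G * G - Y * Y = G * (G - Y) + (G - Y) * Y := by noncomm_ring
    rw [e1] at h0
    have e2 : star v ⬝ᵥ (G * (G - Y)) *ᵥ v = (μ : ℂ) * (star v ⬝ᵥ G *ᵥ v) := by
      rw [← mulVec_mulVec, heig, mulVec_smul, dotProduct_smul]
      rw [smul_eq_mul]
    have e3 : star v ⬝ᵥ ((G - Y) * Y) *ᵥ v = (μ : ℂ) * (star v ⬝ᵥ Y *ᵥ v) := by
      rw [← mulVec_mulVec, dotProduct_mulVec, ← hT.eq, ← star_mulVec, heig]
      rw [star_smul, smul_dotProduct]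
      simp [smul_eq_mul, Complex.conj_ofReal]
    rw [add_mulVec, dotProduct_add, e2, e3, ← mul_add] at h0
    exact h0
  have hGv := hG.dotProduct_mulVec_nonneg v
  have hYv := hY.dotProduct_mulVec_nonneg v
  by_cases hz : star v ⬝ᵥ G *ᵥ v + star v ⬝ᵥ Y *ᵥ v = 0
  · have hG0 : star v ⬝ᵥ G *ᵥ v = 0 := by
      have h1 : star v ⬝ᵥ G *ᵥ v ≤ 0 := by
        rw [add_eq_zero_iff_eq_neg] at hz
        rw [hz]
        simpa using hYv
      exact le_antisymm h1 hGv
    have hY0 : star v ⬝ᵥ Y *ᵥ v = 0 := by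
      rw [hG0, zero_add] at hz
      exact hz
    have hGv0 : G *ᵥ v = 0 := (hG.dotProduct_mulVec_zero_iff v).mp hG0
    have hYv0 : Y *ᵥ v = 0 := (hY.dotProduct_mulVec_zero_iff v).mp hY0
    have : (μ : ℂ) • v = 0 := by rw [← heig, sub_mulVec, hGv0, hYv0, sub_zero]
    have hμ0 : (μ : ℂ) = 0 := by
      by_contra hne
      exact hvnz (by rw [← one_smul ℂ v, ← inv_mul_cancel₀ hne, ← smul_smul, this, smul_zero])
    simp only [Complex.ofReal_eq_zero] at hμ0
    rw [hμ0]
    exact le_rfl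
  · have hsum : 0 ≤ star v ⬝ᵥ G *ᵥ v + star v ⬝ᵥ Y *ᵥ v := add_nonneg hGv hYv
    obtain ⟨r, hr, hrz⟩ : ∃ r : ℝ, 0 ≤ r ∧ star v ⬝ᵥ G *ᵥ v + star v ⬝ᵥ Y *ᵥ v = (r : ℂ) := by
      refine ⟨(star v ⬝ᵥ G *ᵥ v + star v ⬝ᵥ Y *ᵥ v).re, ?_, ?_⟩
      · exact (Complex.le_def.mp hsum).1
      · have him := (Complex.le_def.mp hsum).2
        rw [Complex.ext_iff]
        constructor <;> simp [← him]
    have hrpos : 0 < r := by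
      rcases lt_or_eq_of_le hr with h | h
      · exact h
      · exfalso; apply hz; rw [hrz, ← h]; norm_num
    rw [hrz] at key
    have : (0 : ℂ) ≤ ((μ * r : ℝ) : ℂ) := by push_cast; exact key
    have h2 : (0 : ℝ) ≤ μ * r := by exact_mod_cast this
    exact (mul_nonneg_iff_of_pos_right hrpos).mp h2

/-- the trace as a quadratic form of a Kronecker product -/
lemma trace_eq (S B : Matrix m m ℂ) :
    (S * Bᴴ * S * B).trace
      = star (fun p : m × m => B p.1 p.2) ⬝ᵥ ((S ⊗ₖ Sᵀ) *ᵥ fun p : m × m => B p.1 p.2) := by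
  have lhs : (S * Bᴴ * S * B).trace
      = ∑ a : m, ∑ d : m, ∑ c : m, ∑ b : m,
          S a b * (starRingEnd ℂ) (B c b) * S c d * B d a := by
    rw [trace]
    simp only [diag_apply, mul_apply, conjTranspose_apply, Finset.sum_mul, RCLike.star_def]
  have rhs : star (fun p : m × m => B p.1 p.2) ⬝ᵥ ((S ⊗ₖ Sᵀ) *ᵥ fun p : m × m => B p.1 p.2)
      = ∑ c : m, ∑ b : m, ∑ d : m, ∑ a : m,
          (starRingEnd ℂ) (B c b) * (S c d * S a b) * B d a := by
    simp only [dotProduct, mulVec, kroneckerMap_apply, transpose_apply, Pi.star_apply,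
      Fintype.sum_prod_type, Finset.mul_sum, RCLike.star_def]
    refine Finset.sum_congr rfl fun c _ => Finset.sum_congr rfl fun b _ =>
      Finset.sum_congr rfl fun d _ => Finset.sum_congr rfl fun a _ => by ring
  rw [lhs, rhs]
  have flat1 : (∑ a : m, ∑ d : m, ∑ c : m, ∑ b : m,
        S a b * (starRingEnd ℂ) (B c b) * S c d * B d a)
      = ∑ p : (m × m) × (m × m),
          S p.1.1 p.2.2 * (starRingEnd ℂ) (B p.2.1 p.2.2) * S p.2.1 p.1.2 * B p.1.2 p.1.1 := by
    simp [Fintype.sum_prod_type]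
  have flat2 : (∑ c : m, ∑ b : m, ∑ d : m, ∑ a : m,
        (starRingEnd ℂ) (B c b) * (S c d * S a b) * B d a)
      = ∑ q : (m × m) × (m × m),
          (starRingEnd ℂ) (B q.1.1 q.1.2) * (S q.1.1 q.2.1 * S q.2.2 q.1.2) * B q.2.1 q.2.2 := by
    simp [Fintype.sum_prod_type]
  rw [flat1, flat2]
  refine (Fintype.sum_equiv ⟨fun q => ((q.2.2, q.2.1), q.1), fun p => (p.2, (p.1.2, p.1.1)),
    fun q => rfl, fun p => rfl⟩ _ _ fun q => ?_).symm
  simp only [Equiv.coe_fn_mk]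
  ring

/-- the key algebraic expansion: sum of four `(M K + N)ᴴ (M K + N)` -/
lemma block_expand (M₁ N₁ M₂ N₂ M₃ N₃ M₄ N₄ K P X Q : Matrix m m ℂ)
    (hP : M₁ᴴ * M₁ + M₂ᴴ * M₂ + M₃ᴴ * M₃ + M₄ᴴ * M₄ = P)
    (hX : M₁ᴴ * N₁ + M₂ᴴ * N₂ + M₃ᴴ * N₃ + M₄ᴴ * N₄ = X)
    (hX' : N₁ᴴ * M₁ + N₂ᴴ * M₂ + N₃ᴴ * M₃ + N₄ᴴ * M₄ = X)
    (hQ : N₁ᴴ * N₁ + N₂ᴴ * N₂ + N₃ᴴ * N₃ + N₄ᴴ * N₄ = Q) :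
    (Kᴴ * P * K + Kᴴ * X + X * K + Q).PosSemidef := by
  have key : Kᴴ * P * K + Kᴴ * X + X * K + Q
      = (M₁ * K + N₁)ᴴ * (M₁ * K + N₁) + (M₂ * K + N₂)ᴴ * (M₂ * K + N₂)
        + (M₃ * K + N₃)ᴴ * (M₃ * K + N₃) + (M₄ * K + N₄)ᴴ * (M₄ * K + N₄) := by
    rw [← hP, ← hQ]
    nth_rewrite 2 [← hX']
    rw [← hX]
    simp only [conjTranspose_add, conjTranspose_mul, add_mul, mul_add, Matrix.mul_assoc]
    abel
  rw [key]
  exact (((posSemidef_conjTranspose_mul_self _).add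
    (posSemidef_conjTranspose_mul_self _)).add
    (posSemidef_conjTranspose_mul_self _)).add
    (posSemidef_conjTranspose_mul_self _)


lemma sqrt_add_le' (x ε : ℝ) (hx : 0 ≤ x) (hε : 0 ≤ ε) :
    Real.sqrt (x + ε) ≤ Real.sqrt x + Real.sqrt ε := by
  have h := Real.sqrt_le_sqrt (show x + ε ≤ (Real.sqrt x + Real.sqrt ε)^2 by
    nlinarith [Real.sq_sqrt hx, Real.sq_sqrt hε, Real.sqrt_nonneg x, Real.sqrt_nonneg ε])
  rwa [Real.sqrt_sq (by positivity)] at h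

lemma smul_conj_mul_smul (r : ℝ) (A C : Matrix m m ℂ) :
    ((r : ℂ) • A)ᴴ * ((r : ℂ) • C) = ((r * r : ℝ) : ℂ) • (Aᴴ * C) := by
  rw [conjTranspose_smul, Matrix.smul_mul, Matrix.mul_smul, smul_smul]
  congr 1
  rw [RCLike.star_def, Complex.conj_ofReal, ← Complex.ofReal_mul]

lemma smul_one_sq (r : ℝ) :
    ((r : ℂ) • (1 : Matrix m m ℂ))ᴴ * ((r : ℂ) • (1 : Matrix m m ℂ))
      = ((r * r : ℝ) : ℂ) • (1 : Matrix m m ℂ) := by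
  rw [smul_conj_mul_smul, conjTranspose_one, Matrix.one_mul]

lemma pair_facts {s γ : Matrix m m ℂ} (hs : sᴴ = s) (hss : s * s = γ) (τ : ℝ) (hτ : 0 ≤ τ) :
    ((Real.sqrt τ : ℂ) • (s ⊗ₖ (1 : Matrix m m ℂ)))ᴴ * ((Real.sqrt τ : ℂ) • (s ⊗ₖ (1 : Matrix m m ℂ)))
        = (τ : ℂ) • (γ ⊗ₖ (1 : Matrix m m ℂ))
    ∧ ((Real.sqrt τ : ℂ) • (s ⊗ₖ (1 : Matrix m m ℂ)))ᴴ * ((Real.sqrt τ : ℂ) • ((1 : Matrix m m ℂ) ⊗ₖ sᵀ))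
        = (τ : ℂ) • (s ⊗ₖ sᵀ)
    ∧ ((Real.sqrt τ : ℂ) • ((1 : Matrix m m ℂ) ⊗ₖ sᵀ))ᴴ * ((Real.sqrt τ : ℂ) • (s ⊗ₖ (1 : Matrix m m ℂ)))
        = (τ : ℂ) • (s ⊗ₖ sᵀ)
    ∧ ((Real.sqrt τ : ℂ) • ((1 : Matrix m m ℂ) ⊗ₖ sᵀ))ᴴ * ((Real.sqrt τ : ℂ) • ((1 : Matrix m m ℂ) ⊗ₖ sᵀ))
        = (τ : ℂ) • ((1 : Matrix m m ℂ) ⊗ₖ γᵀ) := by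
  have hτ2 : Real.sqrt τ * Real.sqrt τ = τ := Real.mul_self_sqrt hτ
  have hsT : (sᵀ)ᴴ = sᵀ := by
    have : (sᵀ)ᴴ = (sᴴ)ᵀ := rfl
    rw [this, hs]
  have hsTsT : sᵀ * sᵀ = γᵀ := by rw [← Matrix.transpose_mul, hss]
  have hkh1 : (s ⊗ₖ (1 : Matrix m m ℂ))ᴴ = s ⊗ₖ 1 := by
    rw [kron_conjTranspose, hs, conjTranspose_one]
  have hkh2 : ((1 : Matrix m m ℂ) ⊗ₖ sᵀ)ᴴ = 1 ⊗ₖ sᵀ := by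
    rw [kron_conjTranspose, hsT, conjTranspose_one]
  refine ⟨?_, ?_, ?_, ?_⟩ <;>
    rw [smul_conj_mul_smul, hτ2] <;>
    [rw [hkh1]; rw [hkh1]; rw [hkh2]; rw [hkh2]] <;>
    rw [← Matrix.mul_kronecker_mul] <;>
    simp only [Matrix.one_mul, Matrix.mul_one, hss, hsTsT]

end WYaux

open WYaux

/-- Wigner–Yanase concavity: the map `γ ↦ Tr(γ^{1/2} B† γ^{1/2} B)` is concave
on nonnegative (trace-class) operators `γ` on a (finite-dimensional) Hilbert space. -/
theorem wigner_yanase_concavity {n : Type*} [Fintype n] [DecidableEq n]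
    (B γ₁ γ₂ : Matrix n n ℂ) (h1 : γ₁.PosSemidef) (h2 : γ₂.PosSemidef)
    (t : ℝ) (ht0 : 0 ≤ t) (ht1 : t ≤ 1)
    (h12 : (t • γ₁ + (1 - t) • γ₂).PosSemidef) :
    t * ((h1.sqrt * Bᴴ * h1.sqrt * B).trace).re +
        (1 - t) * ((h2.sqrt * Bᴴ * h2.sqrt * B).trace).re ≤
      ((h12.sqrt * Bᴴ * h12.sqrt * B).trace).re := by
  classical
  have ht1' : (0:ℝ) ≤ 1 - t := by linarith
  set σ : Matrix n n ℂ := t • γ₁ + (1 - t) • γ₂ with hσdef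
  have csmul : ∀ (r : ℝ) (M : Matrix n n ℂ), r • M = (r : ℂ) • M := by
    intro r M
    ext i j
    simp [Matrix.smul_apply, Complex.real_smul]
  have hσc : σ = (t : ℂ) • γ₁ + ((1 - t : ℝ) : ℂ) • γ₂ := by
    rw [hσdef, csmul, csmul]
  set U : Matrix n n ℂ := (h12.1.eigenvectorUnitary : Matrix n n ℂ) with hUdef
  have hU : Uᴴ * U = 1 := by
    have h := h12.1.eigenvectorUnitary.2
    rw [Matrix.mem_unitaryGroup_iff'] at h
    simpa [Matrix.star_eq_conjTranspose] using h
  have hU' : U * Uᴴ = 1 := by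
    have h := h12.1.eigenvectorUnitary.2
    rw [Matrix.mem_unitaryGroup_iff] at h
    simpa [Matrix.star_eq_conjTranspose] using h
  set lam : n → ℝ := h12.1.eigenvalues with hlamdef
  have hlam : ∀ i, 0 ≤ lam i := fun i => h12.eigenvalues_nonneg i
  have hσU : σ = cong U lam := by
    rw [cong]
    have := h12.1.spectral_theorem
    rw [Unitary.conjStarAlgAut_apply] at this
    exact this
  have hs0 : h12.sqrt = cong U (fun i => Real.sqrt (lam i)) := rfl
  -- quadratic form setup
  set v : n × n → ℂ := fun p => B p.1 p.2 with hvdef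
  set W₁ := h1.sqrt ⊗ₖ h1.sqrtᵀ with hW1def
  set W₂ := h2.sqrt ⊗ₖ h2.sqrtᵀ with hW2def
  set G₀ := h12.sqrt ⊗ₖ h12.sqrtᵀ with hG0def
  set X := (t : ℂ) • W₁ + ((1 - t : ℝ) : ℂ) • W₂ with hXdef
  have htr1 : (h1.sqrt * Bᴴ * h1.sqrt * B).trace = star v ⬝ᵥ W₁ *ᵥ v := trace_eq _ B
  have htr2 : (h2.sqrt * Bᴴ * h2.sqrt * B).trace = star v ⬝ᵥ W₂ *ᵥ v := trace_eq _ B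
  have htr0 : (h12.sqrt * Bᴴ * h12.sqrt * B).trace = star v ⬝ᵥ G₀ *ᵥ v := trace_eq _ B
  have hXv : (star v ⬝ᵥ X *ᵥ v)
      = (t : ℂ) * (star v ⬝ᵥ W₁ *ᵥ v) + ((1 - t : ℝ) : ℂ) * (star v ⬝ᵥ W₂ *ᵥ v) := by
    rw [hXdef, add_mulVec, smul_mulVec, smul_mulVec, dotProduct_add,
      dotProduct_smul, dotProduct_smul, smul_eq_mul, smul_eq_mul]
  rw [htr1, htr2, htr0]
  have hgoal_lhs : t * (star v ⬝ᵥ W₁ *ᵥ v).re + (1 - t) * (star v ⬝ᵥ W₂ *ᵥ v).re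
      = (star v ⬝ᵥ X *ᵥ v).re := by
    rw [hXv]
    simp [Complex.add_re, Complex.mul_re, Complex.ofReal_re, Complex.ofReal_im]
  rw [hgoal_lhs]
  -- the constant
  set c : ℝ := ∑ i, Real.sqrt (lam i) with hcdef
  have hc : 0 ≤ c := Finset.sum_nonneg fun i _ => Real.sqrt_nonneg _
  -- key positivity for every ε > 0
  have KEY : ∀ ε : ℝ, 0 < ε →
      (G₀ + (((2 * c * Real.sqrt ε + ε) : ℝ) : ℂ) • (1 : Matrix (n × n) (n × n) ℂ)
        - X).PosSemidef := by
    intro ε hε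
    -- scalar level
    set sq : n → ℝ := fun i => Real.sqrt (lam i + ε) with hsqdef
    have hlampos : ∀ i, 0 < lam i + ε := fun i => by have := hlam i; linarith
    have hsqpos : ∀ i, 0 < sq i := fun i => Real.sqrt_pos.mpr (hlampos i)
    have hsqsq : ∀ i, sq i * sq i = lam i + ε := fun i => Real.mul_self_sqrt (hlampos i).le
    -- small matrices
    set sε := cong U sq with hsedef
    set rε := cong U (fun i => (sq i)⁻¹) with hredef
    set s₀ := cong U (fun i => Real.sqrt (lam i)) with hs0def
    have hseH : sεᴴ = sε := cong_herm U sq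
    have hreH : rεᴴ = rε := cong_herm U _
    have hs0H : s₀ᴴ = s₀ := cong_herm U _
    have hsePSD : sε.PosSemidef := cong_psd U sq (fun i => (hsqpos i).le)
    have hrePSD : rε.PosSemidef := cong_psd U _ (fun i => by positivity)
    have hs0PSD : s₀.PosSemidef := cong_psd U _ (fun i => Real.sqrt_nonneg _)
    have hσe : σ + (ε : ℂ) • 1 = cong U (fun i => lam i + ε) := by
      rw [hσU, ← cong_const U hU' ε, cong_add U]
    have hsr : sε * rε = 1 := by
      rw [hsedef, hredef, cong_mul U hU]
      have h : (fun i => sq i * (sq i)⁻¹) = fun _ : n => (1:ℝ) :=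
        funext fun i => mul_inv_cancel₀ (hsqpos i).ne'
      rw [h, cong_one U hU']
    have hrs : rε * sε = 1 := by
      rw [hsedef, hredef, cong_mul U hU]
      have h : (fun i => (sq i)⁻¹ * sq i) = fun _ : n => (1:ℝ) :=
        funext fun i => inv_mul_cancel₀ (hsqpos i).ne'
      rw [h, cong_one U hU']
    have hss : sε * sε = σ + (ε : ℂ) • 1 := by
      rw [hsedef, cong_mul U hU, hσe]
      exact congrArg _ (funext hsqsq)
    have hrr_pe : (rε * rε) * (σ + (ε : ℂ) • 1) = 1 := by
      rw [hredef, cong_mul U hU, hσe, cong_mul U hU]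
      have h : (fun i => (sq i)⁻¹ * (sq i)⁻¹ * (lam i + ε)) = fun _ : n => (1:ℝ) := by
        funext i
        rw [← hsqsq i, ← mul_inv, inv_mul_cancel₀ (mul_pos (hsqpos i) (hsqpos i)).ne']
      rw [h, cong_one U hU']
    -- big matrices
    set Pε := (σ + (ε : ℂ) • 1) ⊗ₖ (1 : Matrix n n ℂ) with hPedef
    set Ph := sε ⊗ₖ (1 : Matrix n n ℂ) with hPhdef
    set Pmh := rε ⊗ₖ (1 : Matrix n n ℂ) with hPmhdef
    set Pinv := (rε * rε) ⊗ₖ (1 : Matrix n n ℂ) with hPinvdef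
    set Qε := (1 : Matrix n n ℂ) ⊗ₖ (σᵀ + (ε : ℂ) • 1) with hQedef
    set Gε := sε ⊗ₖ sεᵀ with hGedef
    set G' := rε ⊗ₖ sεᵀ with hG'def
    have hW1H : W₁ᴴ = W₁ := by
      rw [hW1def, kron_conjTranspose, h1.posSemidef_sqrt.1]
      congr 1
      rw [Matrix.conjTranspose_transpose_eq_transpose_conjTranspose, h1.posSemidef_sqrt.1]
    have hW2H : W₂ᴴ = W₂ := by
      rw [hW2def, kron_conjTranspose, h2.posSemidef_sqrt.1]
      congr 1
      rw [Matrix.conjTranspose_transpose_eq_transpose_conjTranspose, h2.posSemidef_sqrt.1]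
    have hXH : Xᴴ = X := by
      rw [hXdef, conjTranspose_add, conjTranspose_smul, conjTranspose_smul, hW1H, hW2H]
      simp [RCLike.star_def, Complex.conj_ofReal]
    have hXPSD : X.PosSemidef := by
      rw [hXdef]
      exact (psd_smul (kron_posSemidef h1.posSemidef_sqrt h1.posSemidef_sqrt.transpose) ht0).add
        (psd_smul (kron_posSemidef h2.posSemidef_sqrt h2.posSemidef_sqrt.transpose) ht1')
    -- step 1 : Schur-type inequality
    have step1 : (Qε - X * Pinv * X).PosSemidef := by
      obtain ⟨p11, p12, p13, p14⟩ :=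
        pair_facts h1.posSemidef_sqrt.1 h1.sqrt_mul_self t ht0
      obtain ⟨p21, p22, p23, p24⟩ :=
        pair_facts h2.posSemidef_sqrt.1 h2.sqrt_mul_self (1 - t) ht1'
      set K := -(Pinv * X) with hKdef
      have hPinvH : Pinvᴴ = Pinv := by
        rw [hPinvdef, kron_conjTranspose, conjTranspose_mul, hreH, conjTranspose_one]
      have hKH : Kᴴ = -(X * Pinv) := by
        rw [hKdef, conjTranspose_neg, conjTranspose_mul, hXH, hPinvH]
      have hPP : Pinv * Pε = 1 := by
        rw [hPinvdef, hPedef, ← Matrix.mul_kronecker_mul, hrr_pe, Matrix.one_mul,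
          Matrix.one_kronecker_one]
      have hsum := block_expand
        ((Real.sqrt t : ℂ) • (h1.sqrt ⊗ₖ (1 : Matrix n n ℂ)))
        ((Real.sqrt t : ℂ) • ((1 : Matrix n n ℂ) ⊗ₖ h1.sqrtᵀ))
        ((Real.sqrt (1 - t) : ℂ) • (h2.sqrt ⊗ₖ (1 : Matrix n n ℂ)))
        ((Real.sqrt (1 - t) : ℂ) • ((1 : Matrix n n ℂ) ⊗ₖ h2.sqrtᵀ))
        ((Real.sqrt ε : ℂ) • 1) 0 0 ((Real.sqrt ε : ℂ) • 1)
        K Pε X Qε ?_ ?_ ?_ ?_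
      rotate_left
      · -- hP
        rw [p11, p21, smul_one_sq, Real.mul_self_sqrt hε.le, conjTranspose_zero,
          Matrix.zero_mul, add_zero, hPedef, hσc]
        rw [Matrix.add_kronecker, Matrix.add_kronecker, Matrix.smul_kronecker,
          Matrix.smul_kronecker, Matrix.smul_kronecker, Matrix.one_kronecker_one]
      · -- hX
        rw [p12, p22, Matrix.mul_zero, conjTranspose_zero, Matrix.zero_mul, add_zero, add_zero,
          hXdef, hW1def, hW2def]
      · -- hX'
        rw [p13, p23, conjTranspose_zero, Matrix.zero_mul, Matrix.mul_zero, add_zero, add_zero,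
          hXdef, hW1def, hW2def]
      · -- hQ
        rw [p14, p24, conjTranspose_zero, Matrix.zero_mul, add_zero, smul_one_sq,
          Real.mul_self_sqrt hε.le, hQedef, hσc]
        rw [Matrix.transpose_add, Matrix.transpose_smul, Matrix.transpose_smul,
          Matrix.kronecker_add, Matrix.kronecker_add, Matrix.kronecker_smul,
          Matrix.kronecker_smul, Matrix.kronecker_smul, Matrix.one_kronecker_one]
      -- use the expansion
      have main_eq : Kᴴ * Pε * K + Kᴴ * X + X * K + Qε = Qε - X * Pinv * X := by
        have e1 : X * Pinv * Pε = X := by rw [Matrix.mul_assoc, hPP, Matrix.mul_one]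
        have t1 : Kᴴ * Pε * K = X * Pinv * X := by
          rw [hKH, hKdef, neg_mul, e1, neg_mul_neg, Matrix.mul_assoc]
        have t2 : Kᴴ * X = -(X * Pinv * X) := by rw [hKH, neg_mul]
        have t3 : X * K = -(X * Pinv * X) := by rw [hKdef, mul_neg, Matrix.mul_assoc]
        rw [t1, t2, t3]
        abel
      rwa [main_eq] at hsum
    -- step 2 : square root monotonicity
    have hPmhH : Pmhᴴ = Pmh := by
      rw [hPmhdef, kron_conjTranspose, hreH, conjTranspose_one]
    have hPhH : Phᴴ = Ph := by
      rw [hPhdef, kron_conjTranspose, hseH, conjTranspose_one]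
    set Y := Pmh * X * Pmh with hYdef
    have hYPSD : Y.PosSemidef := by
      have h := hXPSD.conjTranspose_mul_mul_same Pmh
      rwa [hPmhH] at h
    have hPmhPmh : Pmh * Pmh = Pinv := by
      rw [hPmhdef, hPinvdef, ← Matrix.mul_kronecker_mul, Matrix.one_mul]
    have hseT_psd : (sεᵀ).PosSemidef := hsePSD.transpose
    have hG'PSD : G'.PosSemidef := kron_posSemidef hrePSD hseT_psd
    have hsTsT : sεᵀ * sεᵀ = σᵀ + (ε : ℂ) • 1 := by
      rw [← Matrix.transpose_mul, hss, Matrix.transpose_add, Matrix.transpose_smul,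
        Matrix.transpose_one]
    have hGsq : (G' * G' - Y * Y).PosSemidef := by
      have e1 : Y * Y = Pmh * (X * Pinv * X) * Pmh := by
        rw [hYdef, ← hPmhPmh]
        simp only [Matrix.mul_assoc]
      have e2 : G' * G' = Pmh * Qε * Pmh := by
        rw [hG'def, hPmhdef, hQedef, ← Matrix.mul_kronecker_mul, ← Matrix.mul_kronecker_mul,
          ← Matrix.mul_kronecker_mul, hsTsT]
        rw [Matrix.mul_one, Matrix.one_mul, Matrix.mul_one]
      have e3 : G' * G' - Y * Y = Pmh * (Qε - X * Pinv * X) * Pmh := by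
        rw [e1, e2, Matrix.mul_sub, Matrix.sub_mul]
      rw [e3]
      have h := step1.conjTranspose_mul_mul_same Pmh
      rwa [hPmhH] at h
    have hG'Y : (G' - Y).PosSemidef := sqrt_mono hYPSD hG'PSD hGsq
    -- step 3 : conjugate back
    have hPhPmh : Ph * Pmh = 1 := by
      rw [hPhdef, hPmhdef, ← Matrix.mul_kronecker_mul, hsr, Matrix.one_mul,
        Matrix.one_kronecker_one]
    have hPmhPh : Pmh * Ph = 1 := by
      rw [hPhdef, hPmhdef, ← Matrix.mul_kronecker_mul, hrs, Matrix.one_mul,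
        Matrix.one_kronecker_one]
    have hGeX : (Gε - X).PosSemidef := by
      have conj := hG'Y.conjTranspose_mul_mul_same Ph
      rw [hPhH] at conj
      have e3 : Ph * (G' - Y) * Ph = Gε - X := by
        rw [Matrix.mul_sub, Matrix.sub_mul]
        congr 1
        · rw [hPhdef, hG'def, hGedef, ← Matrix.mul_kronecker_mul, ← Matrix.mul_kronecker_mul,
            hsr, Matrix.one_mul, Matrix.one_mul, Matrix.mul_one]
        · have e4 : Ph * (Pmh * X * Pmh) * Ph = (Ph * Pmh) * (X * (Pmh * Ph)) := by
            simp only [Matrix.mul_assoc]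
          rw [hYdef, e4, hPhPmh, hPmhPh, Matrix.one_mul, Matrix.mul_one]
      rwa [e3] at conj
    -- step 4 : compare Gε with G₀
    set eps := cong U (fun i => Real.sqrt (lam i + ε) - Real.sqrt (lam i)) with hepsdef
    have heps : sε - s₀ = eps := cong_sub U sq _
    have hse_dec : sε = s₀ + eps := by rw [← heps]; abel
    have hG0' : G₀ = s₀ ⊗ₖ s₀ᵀ := by rw [hG0def, hs0, hs0def]
    have heps_psd : eps.PosSemidef := by
      apply cong_psd U
      intro i
      have := Real.sqrt_le_sqrt (show lam i ≤ lam i + ε by linarith)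
      linarith
    have heps_le : ((Real.sqrt ε : ℂ) • 1 - eps).PosSemidef := by
      rw [← cong_const U hU' (Real.sqrt ε), cong_sub U]
      apply cong_psd U
      intro i
      have := sqrt_add_le' (lam i) ε (hlam i) hε.le
      simp only [sub_nonneg]
      linarith
    have hs0_le : ((c : ℂ) • 1 - s₀).PosSemidef := by
      rw [← cong_const U hU' c, cong_sub U]
      apply cong_psd U
      intro i
      simp only [sub_nonneg]
      exact Finset.single_le_sum (f := fun j => Real.sqrt (lam j))
        (fun j _ => Real.sqrt_nonneg _) (Finset.mem_univ i)
    have htrans_sub : ∀ (A C : Matrix n n ℂ), (A - C)ᵀ = Aᵀ - Cᵀ := fun A C => Matrix.transpose_sub A C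
    have hs0T_le : ((c : ℂ) • 1 - s₀ᵀ).PosSemidef := by
      have h := hs0_le.transpose
      rwa [Matrix.transpose_sub, Matrix.transpose_smul, Matrix.transpose_one] at h
    have hepsT_le : ((Real.sqrt ε : ℂ) • 1 - epsᵀ).PosSemidef := by
      have h := heps_le.transpose
      rwa [Matrix.transpose_sub, Matrix.transpose_smul, Matrix.transpose_one] at h
    have k1 := kron_le_kron heps_psd hs0PSD.transpose heps_le hs0T_le
    have k2 := kron_le_kron hs0PSD heps_psd.transpose hs0_le hepsT_le
    have k3 := kron_le_kron heps_psd heps_psd.transpose heps_le hepsT_le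
    have hGe_dec : Gε = G₀ + (eps ⊗ₖ s₀ᵀ + s₀ ⊗ₖ epsᵀ + eps ⊗ₖ epsᵀ) := by
      rw [hGedef, hse_dec, hG0', Matrix.transpose_add, Matrix.add_kronecker,
        Matrix.kronecker_add, Matrix.kronecker_add]
      abel
    have hdelta : (((2 * c * Real.sqrt ε + ε) : ℝ) : ℂ) • (1 : Matrix (n × n) (n × n) ℂ)
        = ((Real.sqrt ε : ℂ) • 1) ⊗ₖ ((c : ℂ) • (1 : Matrix n n ℂ))
          + ((c : ℂ) • 1) ⊗ₖ ((Real.sqrt ε : ℂ) • (1 : Matrix n n ℂ))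
          + ((Real.sqrt ε : ℂ) • 1) ⊗ₖ ((Real.sqrt ε : ℂ) • (1 : Matrix n n ℂ)) := by
      simp only [Matrix.smul_kronecker, Matrix.kronecker_smul, Matrix.one_kronecker_one,
        smul_smul, ← add_smul]
      congr 1
      have hε' : (Real.sqrt ε : ℂ) * (Real.sqrt ε : ℂ) = (ε : ℂ) := by
        rw [← Complex.ofReal_mul, Real.mul_self_sqrt hε.le]
      push_cast
      rw [← hε']
      ring
    have final : G₀ + (((2 * c * Real.sqrt ε + ε) : ℝ) : ℂ) • (1 : Matrix (n × n) (n × n) ℂ) - X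
        = ((((Real.sqrt ε : ℂ) • 1) ⊗ₖ ((c : ℂ) • (1 : Matrix n n ℂ)) - eps ⊗ₖ s₀ᵀ)
          + (((c : ℂ) • 1) ⊗ₖ ((Real.sqrt ε : ℂ) • (1 : Matrix n n ℂ)) - s₀ ⊗ₖ epsᵀ)
          + (((Real.sqrt ε : ℂ) • 1) ⊗ₖ ((Real.sqrt ε : ℂ) • (1 : Matrix n n ℂ)) - eps ⊗ₖ epsᵀ))
          + (Gε - X) := by
      rw [hdelta, hGe_dec]
      abel
    rw [final]
    exact (((k1.add k2).add k3).add hGeX)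
  -- pass to quadratic forms
  have quad : ∀ ε : ℝ, 0 < ε → (star v ⬝ᵥ X *ᵥ v).re
      ≤ (star v ⬝ᵥ G₀ *ᵥ v).re + (2 * c * Real.sqrt ε + ε) * (star v ⬝ᵥ v).re := by
    intro ε hε
    have h := (KEY ε hε).re_dotProduct_nonneg v
    have hexp : star v ⬝ᵥ (G₀ + (((2 * c * Real.sqrt ε + ε) : ℝ) : ℂ) • 1 - X) *ᵥ v
        = star v ⬝ᵥ G₀ *ᵥ v + (((2 * c * Real.sqrt ε + ε) : ℝ) : ℂ) * (star v ⬝ᵥ v)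
          - star v ⬝ᵥ X *ᵥ v := by
      rw [sub_mulVec, add_mulVec, smul_mulVec, one_mulVec, dotProduct_sub, dotProduct_add,
        dotProduct_smul, smul_eq_mul]
    rw [hexp] at h
    simp only [RCLike.re_to_complex, Complex.sub_re, Complex.add_re, Complex.mul_re,
      Complex.ofReal_re, Complex.ofReal_im, zero_mul, sub_zero] at h
    linarith
  -- limit ε → 0
  have hKv : 0 ≤ (star v ⬝ᵥ v).re := by
    have : (0:ℂ) ≤ star v ⬝ᵥ v := dotProduct_star_self_nonneg v
    exact (Complex.le_def.mp this).1
  have tend : Filter.Tendsto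
      (fun ε : ℝ => (star v ⬝ᵥ G₀ *ᵥ v).re + (2 * c * Real.sqrt ε + ε) * (star v ⬝ᵥ v).re)
      (nhdsWithin 0 (Set.Ioi 0)) (nhds ((star v ⬝ᵥ G₀ *ᵥ v).re)) := by
    have hcont : Continuous
        (fun ε : ℝ => (star v ⬝ᵥ G₀ *ᵥ v).re + (2 * c * Real.sqrt ε + ε) * (star v ⬝ᵥ v).re) := by
      exact continuous_const.add
        (((continuous_const.mul Real.continuous_sqrt).add continuous_id).mul continuous_const)
    have h0 := hcont.tendsto 0
    simp only [Real.sqrt_zero, mul_zero, add_zero, zero_mul, zero_add] at h0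
    have h0' := h0.mono_left (nhdsWithin_le_nhds (s := Set.Ioi (0:ℝ)))
    simpa using h0'
  refine ge_of_tendsto tend ?_
  filter_upwards [self_mem_nhdsWithin] with ε hε
  exact quad ε hε
end

section
/- Localization of square roots: if γ is a nonnegative bounded operator on L²(ℝ³) and χ is a multiplication operator by a real function with |χ(r)| ≤ 1, then χ* γ^{1/2} χ ≤ (χ* γ χ)^{1/2} as operators. -/
open MeasureTheory

noncomputable section

set_option synthInstance.maxHeartbeats 1000000
set_option maxHeartbeats 1000000

open ContinuousLinearMap
open scoped InnerProductSpace NNReal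

section OperatorSqrtMono

variable {E : Type*} [NormedAddCommGroup E] [InnerProductSpace ℂ E] [CompleteSpace E]

theorem sq_le_norm_smul' (f : E →L[ℂ] E) (hf : 0 ≤ f) : f * f ≤ ‖f‖ • f := by
  have hs : IsSelfAdjoint (CFC.sqrt f) := IsSelfAdjoint.of_nonneg (CFC.sqrt_nonneg (a := f))
  have key := CStarAlgebra.star_left_conjugate_le_norm_smul (a := CFC.sqrt f) (b := f)
    (IsSelfAdjoint.of_nonneg hf)
  rw [hs.star_eq] at key
  have comm : ∀ s g : E →L[ℂ] E, s * s = g → g * g = s * g * s := by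
    rintro s g rfl; simp only [mul_assoc]
  calc f * f = CFC.sqrt f * f * CFC.sqrt f := comm _ _ (CFC.sqrt_mul_sqrt_self f hf)
    _ ≤ ‖f‖ • (CFC.sqrt f * CFC.sqrt f) := key
    _ = ‖f‖ • f := by rw [CFC.sqrt_mul_sqrt_self f hf]

theorem norm_apply_sq_le' (f : E →L[ℂ] E) (hf : f.IsPositive) (x : E) :
    ‖f x‖ ^ 2 ≤ ‖f‖ * RCLike.re ⟪f x, x⟫_ℂ := by
  have h := sq_le_norm_smul' f ((nonneg_iff_isPositive f).mpr hf)
  rw [le_def] at h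
  have h2 := h.re_inner_nonneg_left x
  have hsm : ((‖f‖ • f - f * f) x) = ‖f‖ • (f x) - f (f x) := by
    simp [ContinuousLinearMap.mul_apply]
  rw [hsm, inner_sub_left] at h2
  have hre : RCLike.re ⟪(‖f‖ : ℝ) • f x, x⟫_ℂ = ‖f‖ * RCLike.re ⟪f x, x⟫_ℂ := by
    rw [← algebraMap_smul ℂ (‖f‖) (f x), Complex.coe_algebraMap, inner_smul_left]
    simp [Complex.conj_ofReal]
  have hre2 : RCLike.re ⟪f (f x), x⟫_ℂ = ‖f x‖ ^ 2 := by
    have : ⟪f (f x), x⟫_ℂ = ⟪f x, f x⟫_ℂ := by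
      have h3 := ContinuousLinearMap.adjoint_inner_left f x (f x)
      rwa [hf.isSelfAdjoint.adjoint_eq] at h3
    rw [this, inner_self_eq_norm_sq]
  rw [map_sub, hre, hre2] at h2
  linarith

theorem isUnit_of_selfAdjoint_bddBelow' (g : E →L[ℂ] E) (hg : IsSelfAdjoint g)
    {δ : ℝ} (hδ : 0 < δ) (hlb : ∀ x, δ * ‖x‖ ≤ ‖g x‖) : IsUnit g := by
  have h_anti : AntilipschitzWith (⟨δ, hδ.le⟩ : ℝ≥0)⁻¹ g := by
    refine g.antilipschitz_of_bound fun x => ?_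
    show ‖x‖ ≤ δ⁻¹ * ‖g x‖
    rw [inv_mul_eq_div, le_div_iff₀ (by exact_mod_cast hδ)]
    calc ‖x‖ * δ = δ * ‖x‖ := mul_comm _ _
      _ ≤ ‖g x‖ := hlb x
  rw [isUnit_iff_bijective, bijective_iff_dense_range_and_antilipschitz]
  refine ⟨?_, ⟨_, h_anti⟩⟩
  have _inst := h_anti.completeSpace_range_clm
  rw [Submodule.topologicalClosure_eq_top_iff, Submodule.eq_bot_iff]
  intro x hx
  have hgx : g x = 0 := by
    refine ext_inner_left ℂ fun v => ?_
    rw [inner_zero_right]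
    have h1 : ⟪(ContinuousLinearMap.adjoint g) v, x⟫_ℂ = ⟪v, g x⟫_ℂ :=
      ContinuousLinearMap.adjoint_inner_left g x v
    rw [← h1, hg.adjoint_eq]
    exact hx (g v) ⟨v, rfl⟩
  have := hlb x
  rw [hgx, norm_zero] at this
  have hx0 : ‖x‖ = 0 := by nlinarith [norm_nonneg x]
  exact norm_eq_zero.mp hx0

/-- Operator monotonicity of the square root: if `0 ≤ A`, `0 ≤ B` and `A² ≤ B²`,
then `A ≤ B`. -/
theorem sqrt_mono_op (A B : E →L[ℂ] E) (hA : A.IsPositive) (hB : B.IsPositive)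
    (hAB : (B ∘L B - A ∘L A).IsPositive) : (B - A).IsPositive := by
  have hCsa : IsSelfAdjoint (B - A) := hB.isSelfAdjoint.sub hA.isSelfAdjoint
  rw [← nonneg_iff_isPositive, nonneg_iff_isSelfAdjoint_and_quasispectrumRestricts,
    quasispectrumRestricts_iff_spectrumRestricts]
  refine ⟨hCsa, ?_⟩
  rw [SpectrumRestricts.nnreal_iff]
  intro c hc
  by_contra hlt
  push_neg at hlt
  set μ := -c with hμdef
  have hμ : 0 < μ := by simp only [hμdef]; linarith
  set K := ‖A‖ + ‖B‖ + 1 with hKdef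
  have hK0 : 0 < K := by positivity
  have hKA : ‖A‖ ≤ K := by simp only [hKdef]; have := norm_nonneg B; linarith
  have hKB : ‖B‖ ≤ K := by simp only [hKdef]; have := norm_nonneg A; linarith
  set g : E →L[ℂ] E := (B - A) + (μ : ℂ) • 1 with hgdef
  have hgapp : ∀ x, g x = (B - A) x + (μ : ℂ) • x := by
    intro x; simp [hgdef]
  have hgsa : IsSelfAdjoint g := by
    refine hCsa.add ?_
    rw [IsSelfAdjoint]
    rw [star_smul, star_one, Complex.star_def, Complex.conj_ofReal]
  have hlb : ∀ x, (μ ^ 2 / (μ + 2 * K)) * ‖x‖ ≤ ‖g x‖ := by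
    intro x
    set y := g x with hy
    set a := RCLike.re ⟪A x, x⟫_ℂ with hadef
    set b := RCLike.re ⟪B x, x⟫_ℂ with hbdef
    have ha : 0 ≤ a := hA.re_inner_nonneg_left x
    have hb : 0 ≤ b := hB.re_inner_nonneg_left x
    have hA2 : ‖A x‖ ^ 2 ≤ K * a := by
      refine (norm_apply_sq_le' A hA x).trans ?_
      exact mul_le_mul_of_nonneg_right hKA ha
    have hB2 : ‖B x‖ ^ 2 ≤ K * b := by
      refine (norm_apply_sq_le' B hB x).trans ?_
      exact mul_le_mul_of_nonneg_right hKB hb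
    have h0 := hAB.re_inner_nonneg_left x
    have hdecomp : (B ∘L B - A ∘L A) x = B ((B - A) x) + (B - A) (A x) := by
      simp only [ContinuousLinearMap.sub_apply, ContinuousLinearMap.comp_apply, map_sub]
      abel
    have hCx : (B - A) x = y - (μ : ℂ) • x := by
      rw [hy, hgapp x]; abel
    have hterm1 : RCLike.re ⟪B ((B - A) x), x⟫_ℂ
        = RCLike.re ⟪y, B x⟫_ℂ - μ * RCLike.re ⟪x, B x⟫_ℂ := by
      have e1 : ⟪B ((B - A) x), x⟫_ℂ = ⟪(B - A) x, B x⟫_ℂ := by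
        have h3 := ContinuousLinearMap.adjoint_inner_left B x ((B - A) x)
        rwa [hB.isSelfAdjoint.adjoint_eq] at h3
      rw [e1, hCx, inner_sub_left, inner_smul_left, map_sub]
      simp [Complex.conj_ofReal]
    have hterm2 : RCLike.re ⟪(B - A) (A x), x⟫_ℂ
        = RCLike.re ⟪A x, y⟫_ℂ - μ * RCLike.re ⟪A x, x⟫_ℂ := by
      have e1 : ⟪(B - A) (A x), x⟫_ℂ = ⟪A x, (B - A) x⟫_ℂ := by
        have h3 := ContinuousLinearMap.adjoint_inner_left (B - A) x (A x)
        rwa [hCsa.adjoint_eq] at h3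
      rw [e1, hCx, inner_sub_right, inner_smul_right, map_sub]
      simp
    have hxBx : RCLike.re ⟪x, B x⟫_ℂ = b := by
      rw [hbdef]; exact inner_re_symm x (B x)
    have hiii : μ * (a + b) ≤ ‖A x‖ * ‖y‖ + ‖B x‖ * ‖y‖ := by
      rw [hdecomp, inner_add_left, map_add, hterm1, hterm2, hxBx] at h0
      have e2 : RCLike.re ⟪y, B x⟫_ℂ ≤ ‖y‖ * ‖B x‖ :=
        (RCLike.re_le_norm _).trans (norm_inner_le_norm _ _)
      have e3 : RCLike.re ⟪A x, y⟫_ℂ ≤ ‖A x‖ * ‖y‖ :=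
        (RCLike.re_le_norm _).trans (norm_inner_le_norm _ _)
      have := hadef
      nlinarith [e2, e3]
    have hs2 : μ * ((‖A x‖ + ‖B x‖) ^ 2) ≤ 2 * K * ((‖A x‖ + ‖B x‖) * ‖y‖) := by
      nlinarith [sq_nonneg (‖A x‖ - ‖B x‖), hA2, hB2, hiii, hμ.le, ha, hb,
        norm_nonneg (A x), norm_nonneg (B x), norm_nonneg y]
    have hμs : μ * (‖A x‖ + ‖B x‖) ≤ 2 * K * ‖y‖ := by
      rcases (add_nonneg (norm_nonneg (A x)) (norm_nonneg (B x))).eq_or_lt' with hs | hs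
      · rw [hs, mul_zero]; positivity
      · nlinarith [hs2, hs]
    have hx1 : μ * ‖x‖ ≤ ‖y‖ + (‖A x‖ + ‖B x‖) := by
      have e4 : (μ : ℂ) • x = y - (B - A) x := by rw [hCx]; abel
      have e5 : ‖(μ : ℂ) • x‖ = μ * ‖x‖ := by
        rw [norm_smul, Complex.norm_real, Real.norm_eq_abs, abs_of_pos hμ]
      have e6 : ‖(B - A) x‖ ≤ ‖A x‖ + ‖B x‖ := by
        rw [ContinuousLinearMap.sub_apply]
        exact (norm_sub_le _ _).trans (by linarith [norm_nonneg (A x), norm_nonneg (B x)])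
      calc μ * ‖x‖ = ‖(μ : ℂ) • x‖ := e5.symm
        _ = ‖y - (B - A) x‖ := by rw [e4]
        _ ≤ ‖y‖ + ‖(B - A) x‖ := norm_sub_le _ _
        _ ≤ ‖y‖ + (‖A x‖ + ‖B x‖) := by linarith
    rw [div_mul_eq_mul_div, div_le_iff₀ (by positivity)]
    nlinarith [hx1, hμs, hμ.le, norm_nonneg y]
  have hunit : IsUnit g := isUnit_of_selfAdjoint_bddBelow' g hgsa (by positivity) hlb
  rw [spectrum.mem_iff] at hc
  apply hc
  have heq : algebraMap ℝ (E →L[ℂ] E) c - (B - A) = -g := by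
    rw [Algebra.algebraMap_eq_smul_one, hgdef]
    have hsm : (μ : ℂ) • (1 : E →L[ℂ] E) = μ • 1 := by
      rw [← Complex.coe_algebraMap, algebraMap_smul]
    rw [hsm, hμdef, neg_smul]
    abel
  rw [heq]
  exact hunit.neg

end OperatorSqrtMono

abbrev H := Lp ℂ 2 (volume : Measure E3)

/-- Localization of square roots: if `γ ≥ 0` is a bounded operator on `L²(ℝ³)` and `χ` is
multiplication by a real function with `|χ(r)| ≤ 1`, then `χ γ^{1/2} χ ≤ (χ γ χ)^{1/2}`.
Here `sγ` is the square root of `γ` and `t` the square root of `χ γ χ`, both characterized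
as the (unique) positive operators whose squares are `γ` and `χ γ χ` respectively. -/
theorem localization_of_sqrt (γ sγ t χ : H →L[ℂ] H)
    (hγ : γ.IsPositive) (hsγ : sγ.IsPositive) (hsq : sγ ∘L sγ = γ)
    (ht : t.IsPositive) (htsq : t ∘L t = χ ∘L γ ∘L χ)
    (χf : E3 → ℝ) (hb : ∀ r, |χf r| ≤ 1)
    (hχ : ∀ f : H, ⇑(χ f) =ᵐ[volume] fun r => (χf r : ℂ) * f r) :
    (t - χ ∘L sγ ∘L χ).IsPositive := by
  -- χ is self-adjoint
  have hip : ∀ u v : H, ⟪χ u, v⟫_ℂ = ⟪u, χ v⟫_ℂ := by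
    intro u v
    rw [MeasureTheory.L2.inner_def, MeasureTheory.L2.inner_def]
    apply integral_congr_ae
    filter_upwards [hχ u, hχ v] with r h1 h2
    rw [RCLike.inner_apply, RCLike.inner_apply, h1, h2]
    simp only [map_mul, Complex.conj_ofReal]
    ring
  have hsaχ : IsSelfAdjoint χ := ((ContinuousLinearMap.eq_adjoint_iff χ χ).mpr hip).symm
  -- χ is a contraction
  have hnorm : ∀ f : H, ‖χ f‖ ≤ ‖f‖ := by
    intro f
    rw [Lp.norm_def, Lp.norm_def]
    apply ENNReal.toReal_mono (Lp.eLpNorm_ne_top f)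
    calc eLpNorm (χ f) 2 volume = eLpNorm (fun r => (χf r : ℂ) * f r) 2 volume :=
          eLpNorm_congr_ae (hχ f)
      _ ≤ eLpNorm f 2 volume := by
          apply eLpNorm_mono_ae
          filter_upwards with r
          rw [norm_mul]
          calc ‖(χf r : ℂ)‖ * ‖f r‖ ≤ 1 * ‖f r‖ := by
                apply mul_le_mul_of_nonneg_right _ (norm_nonneg _)
                rw [Complex.norm_real, Real.norm_eq_abs]; exact hb r
            _ = ‖f r‖ := one_mul _
  -- 1 - χ² is positive
  have h1mχ : ((1 : H →L[ℂ] H) - χ ∘L χ).IsPositive := by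
    constructor
    · have h2 : IsSelfAdjoint (χ ∘L χ) := by
        show star (χ * χ) = χ * χ
        rw [star_mul, hsaχ.star_eq]
      exact ((IsSelfAdjoint.one (H →L[ℂ] H)).sub h2).isSymmetric
    · intro f
      rw [ContinuousLinearMap.reApplyInnerSelf_apply]
      have happ : ((1 : H →L[ℂ] H) - χ ∘L χ) f = f - χ (χ f) := by
        simp [ContinuousLinearMap.sub_apply]
      rw [happ, inner_sub_left, map_sub, hip (χ f) f, inner_self_eq_norm_sq,
        inner_self_eq_norm_sq]
      nlinarith [hnorm f, norm_nonneg (χ f), norm_nonneg f]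
  -- χ sγ χ is positive
  have hApos : (χ ∘L sγ ∘L χ).IsPositive := by
    have h := hsγ.conj_adjoint χ
    rwa [hsaχ.adjoint_eq] at h
  -- (χ sγ χ)² ≤ t²
  have hAB : (t ∘L t - (χ ∘L sγ ∘L χ) ∘L (χ ∘L sγ ∘L χ)).IsPositive := by
    have h' := h1mχ.adjoint_conj (sγ ∘L χ)
    rw [ContinuousLinearMap.adjoint_comp, hsaχ.adjoint_eq,
      hsγ.isSelfAdjoint.adjoint_eq] at h'
    have e : (χ ∘L sγ) ∘L (((1 : H →L[ℂ] H) - χ ∘L χ) ∘L (sγ ∘L χ))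
        = t ∘L t - (χ ∘L sγ ∘L χ) ∘L (χ ∘L sγ ∘L χ) := by
      rw [htsq, ← hsq]
      show (χ * sγ) * ((1 - χ * χ) * (sγ * χ))
        = χ * ((sγ * sγ) * χ) - (χ * (sγ * χ)) * (χ * (sγ * χ))
      noncomm_ring
    rwa [e] at h'
  exact sqrt_mono_op (χ ∘L sγ ∘L χ) t hApos ht hAB

end
end
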